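/- With notation as in the Dold–Kan shuffle-product setting: let C• be a strictly commutative nonnegatively graded dg algebra, A* = K*(C•), and J ⊆ C⁰ = A⁰ an ideal with a divided power structure. Then the pd structures on J and on V* (the canonical pd structure on the kernel of degeneration) are compatible—i.e. extend to a pd structure on the cosimplicial ideal generated by J compatible with the cosimplicial structure maps—if and only if d(f^{[n]}) = f^{[n-1]} d(f) in C¹ for every f ∈ J and n > 0. -/

import Mathlib

/-!
STATEMENT 8: In the Dold–Kan shuffle-product setting (a strictly commutative
nonnegatively graded dg algebra `C•` with `A* = K*(C•)`; hand-rolled as a cosimplicial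
commutative ring, cf. STATEMENT 7), let `J ⊆ C⁰ = A⁰` be an ideal with a divided power
structure `γJ`, and let `γV` be the canonical pd structure on the kernel-of-degeneration
ideals `V*`.  Then the pd structures on `J` and on `V*` are *compatible* — i.e. they
extend to a pd structure on the cosimplicial ideal generated by `J` (and `V*`),
compatible with the cosimplicial structure maps — if and only if
`d(f^{[n]}) = f^{[n-1]} d(f)` in `A¹` for every `f ∈ J` and `n > 0`.

Here `d = ∂₀ − ∂₁ : A⁰ → A¹` is the normalized differential (`∂ᵢ` induced by the two
maps `[0] → [1]`), and the product `f^{[n-1]}·d(f)` is taken via the map `[0] → [1]`,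
`0 ↦ 0`, of `E(0,1)`.
-/

structure CosimplicialCommRing where
  A : ℕ → Type
  [cr : ∀ n, CommRing (A n)]
  act : ∀ {m n : ℕ}, (Fin (m + 1) →o Fin (n + 1)) → (A m →+* A n)
  act_id : ∀ n, act (OrderHom.id : Fin (n + 1) →o Fin (n + 1)) = RingHom.id (A n)
  act_comp : ∀ {m n k : ℕ} (f : Fin (m + 1) →o Fin (n + 1))
    (g : Fin (n + 1) →o Fin (k + 1)), (act g).comp (act f) = act (g.comp f)

attribute [instance] CosimplicialCommRing.cr

namespace CosimplicialCommRing

variable (X : CosimplicialCommRing)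

/-- `Vⁿ`: the kernel of the total degeneration `Aⁿ → A⁰`. -/
def V (n : ℕ) : Ideal (X.A n) :=
  RingHom.ker (X.act (OrderHom.const (Fin (n + 1)) (0 : Fin 1)))

/-- `Cᵐ`: the normalized part of `Aᵐ`. -/
def normalized (m : ℕ) : Set (X.A m) :=
  {x | ∀ k : ℕ, k < m → ∀ g : Fin (m + 1) →o Fin (k + 1),
    Function.Surjective g → X.act g x = 0}

/-- The coface `∂₁ : A⁰ → A¹` induced by `[0] → [1], 0 ↦ 0`
(also the `E(0,1)`-structure map giving the `C⁰`-module structure on `C¹`). -/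
def face0 : X.A 0 →+* X.A 1 := X.act (OrderHom.const (Fin 1) (0 : Fin 2))

/-- The coface `∂₀ : A⁰ → A¹` induced by `[0] → [1], 0 ↦ 1`. -/
def face1 : X.A 0 →+* X.A 1 := X.act (OrderHom.const (Fin 1) (1 : Fin 2))

/-- The normalized differential `d = ∂₀ − ∂₁ : A⁰ → A¹`. -/
def diff (f : X.A 0) : X.A 1 := X.face1 f - X.face0 f

/-- The cosimplicial ideal generated by `J` (and `V*`):
`J_Aⁿ = (image of J) ⊔ Vⁿ`. -/
def Jext (J : Ideal (X.A 0)) (n : ℕ) : Ideal (X.A n) :=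
  Ideal.span (X.act (OrderHom.const (Fin 1) (0 : Fin (n + 1))) '' (J : Set (X.A 0))) ⊔
    X.V n

end CosimplicialCommRing

open Finset




section RatDP

variable {A : Type} [CommRing A] [Algebra ℚ A] (I : Ideal A)

theorem natCast_mul_eq_qsmul (c : ℕ) (y : A) : (c : A) * y = (c : ℚ) • y := by
  rw [Algebra.smul_def, map_natCast]

open Classical in
/-- The canonical divided power structure on any ideal of a `ℚ`-algebra. -/
noncomputable def ratDP : DividedPowers I where
  dpow n x := if x ∈ I then (n.factorial : ℚ)⁻¹ • x ^ n else 0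
  dpow_null {n x} hx := by simp [hx]
  dpow_zero {x} hx := by simp [hx]
  dpow_one {x} hx := by simp [hx]
  dpow_mem {n x} hn hx := by
    simp only [if_pos hx]
    have : x ^ n ∈ I := by
      obtain ⟨m, rfl⟩ := Nat.exists_eq_succ_of_ne_zero hn
      exact pow_succ x m ▸ I.mul_mem_left _ hx
    simpa [Algebra.smul_def] using I.mul_mem_left _ this
  dpow_add n {x y} hx hy := by
    beta_reduce
    rw [if_pos (I.add_mem hx hy)]
    rw [Finset.Nat.sum_antidiagonal_eq_sum_range_succ_mk]
    rw [add_pow]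
    rw [Finset.smul_sum]
    refine Finset.sum_congr rfl fun k hk => ?_
    rw [if_pos hx, if_pos hy]
    have hk' : k ≤ n := Nat.lt_succ_iff.mp (Finset.mem_range.mp hk)
    have hne : ∀ j : ℕ, (j.factorial : ℚ) ≠ 0 := fun j => by
      exact_mod_cast j.factorial_ne_zero
    have h : ((n.choose k : ℕ) : ℚ) * (k.factorial : ℕ) * ((n-k).factorial : ℕ)
        = ((n.factorial : ℕ) : ℚ) := by
      exact_mod_cast congrArg (fun t : ℕ => (t : ℚ))
        (Nat.choose_mul_factorial_mul_factorial hk')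
    have hstep : x ^ k * y ^ (n - k) * ((n.choose k : ℕ) : A)
        = ((n.choose k : ℕ) : ℚ) • (x ^ k * y ^ (n - k)) := by
      rw [mul_comm, natCast_mul_eq_qsmul]
    rw [hstep, smul_smul, smul_mul_smul_comm]
    congr 1
    field_simp
    linear_combination h
  dpow_mul n {a x} hx := by
    beta_reduce
    rw [if_pos hx, if_pos (I.mul_mem_left a hx)]
    rw [mul_pow, mul_smul_comm]
  mul_dpow m n {x} hx := by
    beta_reduce
    rw [if_pos hx, if_pos hx, if_pos hx]
    rw [smul_mul_smul_comm, ← pow_add, natCast_mul_eq_qsmul, smul_smul]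
    congr 1
    have h : (((m+n).choose m : ℕ) : ℚ) * (m.factorial : ℕ) * (n.factorial : ℕ)
        = (((m+n).factorial : ℕ) : ℚ) := by
      rw [Nat.choose_symm_add]
      exact_mod_cast congrArg (fun t : ℕ => (t : ℚ))
        (Nat.add_choose_mul_factorial_mul_factorial m n)
    field_simp
    linarith [h]
  dpow_comp m {n x} hn hx := by
    beta_reduce
    have hxn : x ^ n ∈ I := by
      obtain ⟨l, rfl⟩ := Nat.exists_eq_succ_of_ne_zero hn
      exact pow_succ x l ▸ I.mul_mem_left _ hx
    have hmem : (if x ∈ I then (n.factorial : ℚ)⁻¹ • x ^ n else 0) ∈ I := by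
      rw [if_pos hx]
      simpa [Algebra.smul_def] using I.mul_mem_left _ hxn
    rw [if_pos hmem, if_pos hx, if_pos hx]
    rw [smul_pow, ← pow_mul, smul_smul, mul_comm n m, natCast_mul_eq_qsmul, smul_smul]
    congr 1
    rw [inv_pow]
    have h2 : ((m.uniformBell n : ℕ) : ℚ) * ((n.factorial : ℕ) : ℚ) ^ m * ((m.factorial : ℕ):ℚ)
        = (((m*n).factorial : ℕ) : ℚ) := by
      exact_mod_cast congrArg (fun t : ℕ => (t:ℚ)) (Nat.uniformBell_mul_eq m hn)
    have hne : ∀ j : ℕ, (j.factorial : ℚ) ≠ 0 := fun j => by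
      exact_mod_cast j.factorial_ne_zero
    field_simp
    linarith [h2]

theorem ratDP_dpow_eq {n : ℕ} {x : A} (hx : x ∈ I) :
    (ratDP I).dpow n x = (n.factorial : ℚ)⁻¹ • x ^ n := by
  simp only [ratDP, if_pos hx]

end RatDP

/-- Abstract data for the split divided-power extension. -/
structure SplitData (S : Type) [CommRing S] where
  W : Ideal S
  γ : DividedPowers W
  P : ℕ → S
  v : S
  hv : v ∈ W
  P_zero : P 0 = 1
  P_mul : ∀ a b : ℕ, P a * P b = ((a + b).choose a) • P (a + b)

namespace SplitData

variable {S : Type} [CommRing S] (D : SplitData S)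

def PQ (pq : ℕ × ℕ) : S := D.P pq.1 * D.γ.dpow pq.2 D.v

noncomputable def evalD : ((ℕ × ℕ) →₀ ℕ) →+ S :=
  Finsupp.liftAddHom fun pq =>
    AddMonoidHom.mk' (fun c => c • D.PQ pq) (fun a b => add_nsmul _ a b)

@[simp] theorem evalD_single (pq : ℕ × ℕ) (c : ℕ) :
    D.evalD (Finsupp.single pq c) = c • D.PQ pq :=
  Finsupp.liftAddHom_apply_single _ _ _

theorem Q_mem {q : ℕ} (hq : q ≠ 0) : D.γ.dpow q D.v ∈ D.W := D.γ.dpow_mem hq D.hv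

theorem PQ_mem {pq : ℕ × ℕ} (h : pq.2 ≠ 0) : D.PQ pq ∈ D.W :=
  D.W.mul_mem_left _ (D.Q_mem h)

theorem PQ_zero : D.PQ 0 = 1 := by
  show D.P 0 * D.γ.dpow 0 D.v = 1
  rw [D.P_zero, D.γ.dpow_zero D.hv, one_mul]

theorem PQ_mul (ab pq : ℕ × ℕ) : D.PQ ab * D.PQ pq =
    ((ab.1 + pq.1).choose ab.1 * ((ab.2 + pq.2).choose ab.2)) •
      D.PQ (ab.1 + pq.1, ab.2 + pq.2) := by
  have h1 := D.P_mul ab.1 pq.1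
  have h2 := D.γ.mul_dpow (m := ab.2) (n := pq.2) D.hv
  calc D.PQ ab * D.PQ pq
      = (D.P ab.1 * D.P pq.1) * (D.γ.dpow ab.2 D.v * D.γ.dpow pq.2 D.v) := by
        rw [PQ, PQ]; ring
    _ = (((ab.1 + pq.1).choose ab.1) • D.P (ab.1 + pq.1)) *
        ((((ab.2 + pq.2).choose ab.2) : S) * D.γ.dpow (ab.2 + pq.2) D.v) := by rw [h1, h2]
    _ = _ := by
        simp only [nsmul_eq_mul, Nat.cast_mul, PQ]
        ring

def powCoef (p i : ℕ) : ℕ := if p = 0 then 1 else Nat.uniformBell i p * i.factorial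

theorem powCoef_numeric {p : ℕ} (hp : p ≠ 0) (i : ℕ) :
    powCoef p (i + 1) = powCoef p i * (p * i + p).choose (p * i) := by
  simp only [powCoef, if_neg hp]
  apply Nat.eq_of_mul_eq_mul_right (pow_pos p.factorial_pos (i+1))
  have h1 := Nat.uniformBell_mul_eq (i+1) hp
  have h2 := Nat.uniformBell_mul_eq i hp
  have h3 := Nat.add_choose_mul_factorial_mul_factorial (p*i) p
  calc Nat.uniformBell (i+1) p * (i+1).factorial * p.factorial ^ (i+1)
      = Nat.uniformBell (i+1) p * p.factorial ^ (i+1) * (i+1).factorial := by ring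
    _ = ((i+1) * p).factorial := h1
    _ = (p * i + p).factorial := by rw [show (i+1) * p = p * i + p by ring]
    _ = (p * i + p).choose p * (p * i).factorial * p.factorial := h3.symm
    _ = (p * i + p).choose (p * i) * (p * i).factorial * p.factorial := by
        rw [Nat.choose_symm_add]
    _ = (p * i + p).choose (p * i) * (i * p).factorial * p.factorial := by
        rw [show p * i = i * p by ring]
    _ = (p * i + p).choose (p * i) * (Nat.uniformBell i p * p.factorial ^ i * i.factorial)
          * p.factorial := by rw [h2]
    _ = Nat.uniformBell i p * i.factorial * (p * i + p).choose (p * i)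
          * p.factorial ^ (i + 1) := by ring

theorem P_pow (p i : ℕ) : D.P p ^ i = powCoef p i • D.P (p * i) := by
  by_cases hp : p = 0
  · subst hp
    simp [powCoef, D.P_zero]
  · induction i with
    | zero => simp [powCoef, if_neg hp, D.P_zero, Nat.uniformBell_zero_left]
    | succ i ih =>
      rw [pow_succ, ih, smul_mul_assoc, D.P_mul]
      rw [smul_smul, powCoef_numeric hp, show p * i + p = p * (i+1) by ring]

theorem dpow_smul_PQ {p q : ℕ} (hq : q ≠ 0) (c i : ℕ) :
    D.γ.dpow i (c • D.PQ (p, q)) =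
      (c ^ i * Nat.uniformBell i q * powCoef p i) • D.PQ (p * i, q * i) := by
  have h0 : c • D.PQ (p, q) = ((c : S) * D.P p) * D.γ.dpow q D.v := by
    rw [PQ, nsmul_eq_mul, mul_assoc]
  rw [h0, D.γ.dpow_mul (n := i) (D.Q_mem hq), D.γ.dpow_comp (m := i) hq D.hv, mul_pow, D.P_pow,
    mul_comm i q]
  simp only [nsmul_eq_mul, Nat.cast_mul, Nat.cast_pow, PQ]
  ring

/-- Multiply a formal combination by `c • PQ ab`. -/
noncomputable def mulShift (ab : ℕ × ℕ) (c : ℕ) (nn : (ℕ × ℕ) →₀ ℕ) : (ℕ × ℕ) →₀ ℕ :=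
  nn.sum fun pq' c' => Finsupp.single (ab.1 + pq'.1, ab.2 + pq'.2)
    (c * c' * ((ab.1 + pq'.1).choose ab.1 * ((ab.2 + pq'.2).choose ab.2)))

theorem evalD_mulShift (ab : ℕ × ℕ) (c : ℕ) (nn : (ℕ × ℕ) →₀ ℕ) :
    D.evalD (mulShift ab c nn) = (c • D.PQ ab) * D.evalD nn := by
  rw [mulShift, map_finsuppSum]
  rw [show D.evalD nn = nn.sum fun pq c => c • D.PQ pq from Finsupp.liftAddHom_apply _ _]
  rw [Finsupp.mul_sum]
  refine Finsupp.sum_congr fun pq' _ => ?_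
  rw [evalD_single, smul_mul_smul_comm, D.PQ_mul, smul_smul]

theorem smul_PQ_mem {pq : ℕ × ℕ} (h : pq.2 ≠ 0) (c : ℕ) : c • D.PQ pq ∈ D.W := by
  rw [nsmul_eq_mul]
  exact D.W.mul_mem_left _ (D.PQ_mem h)

/-- Key expansion: the divided power of a formal combination of `PQ`'s (with nonzero
second index) is again a formal combination of `PQ`'s, with universal coefficients. -/
theorem sub_expand (G : Finset (ℕ × ℕ)) (hG : ∀ pq ∈ G, pq.2 ≠ 0) :
    ∀ (cf : ℕ × ℕ → ℕ) (d : ℕ), ∃ nn : (ℕ × ℕ) →₀ ℕ,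
      ∀ {S : Type} [CommRing S] (D : SplitData S),
        D.γ.dpow d (∑ pq ∈ G, cf pq • D.PQ pq) = D.evalD nn := by
  classical
  induction G using Finset.induction with
  | empty =>
    intro cf d
    by_cases hd : d = 0
    · refine ⟨Finsupp.single (0, 0) 1, fun D => ?_⟩
      simp [hd, D.γ.dpow_zero D.W.zero_mem, PQ_zero]
      exact D.PQ_zero.symm
    · refine ⟨0, fun D => ?_⟩
      simp [D.γ.dpow_eval_zero hd]
  | @insert t G' ht IH =>
    intro cf d
    have hG' : ∀ pq ∈ G', pq.2 ≠ 0 := fun pq hpq => hG pq (Finset.mem_insert_of_mem hpq)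
    have ht2 : t.2 ≠ 0 := hG t (Finset.mem_insert_self t G')
    choose nj hnj using fun j => IH hG' cf j
    refine ⟨∑ ij ∈ antidiagonal d,
      mulShift (t.1 * ij.1, t.2 * ij.1)
        (cf t ^ ij.1 * Nat.uniformBell ij.1 t.2 * powCoef t.1 ij.1) (nj ij.2),
      fun D => ?_⟩
    have hmem1 : cf t • D.PQ t ∈ D.W := D.smul_PQ_mem ht2 _
    have hmem2 : (∑ pq ∈ G', cf pq • D.PQ pq) ∈ D.W :=
      Submodule.sum_mem _ fun pq hpq => D.smul_PQ_mem (hG' pq hpq) _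
    rw [Finset.sum_insert ht, D.γ.dpow_add (n := d) hmem1 hmem2, map_sum]
    refine Finset.sum_congr rfl fun ij _ => ?_
    rw [evalD_mulShift, ← hnj ij.2 D]
    have hteta : t = (t.1, t.2) := rfl
    rw [hteta, D.dpow_smul_PQ ht2 (cf (t.1, t.2)) ij.1]

section RatInstance

open MvPolynomial

/-- The universal model: `ℚ[X,Y]`. -/
abbrev LL : Type := MvPolynomial Bool ℚ

noncomputable def WQ : Ideal LL := Ideal.span {X true, X false}

theorem Xt_mem : (X true : LL) ∈ WQ := Ideal.subset_span (by simp)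
theorem Xf_mem : (X false : LL) ∈ WQ := Ideal.subset_span (by simp)
theorem XtXf_mem : (X true + X false : LL) ∈ WQ := WQ.add_mem Xt_mem Xf_mem

theorem Xt_pow_mem {k : ℕ} (hk : k ≠ 0) : (X true : LL) ^ k ∈ WQ := by
  obtain ⟨l, rfl⟩ := Nat.exists_eq_succ_of_ne_zero hk
  exact pow_succ (X true : LL) l ▸ WQ.mul_mem_left _ Xt_mem

/-- The universal split data over `ℚ[X,Y]`. -/
noncomputable def DQ : SplitData LL where
  W := WQ
  γ := ratDP WQ
  P a := (a.factorial : ℚ)⁻¹ • X true ^ a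
  v := X false
  hv := Xf_mem
  P_zero := by simp
  P_mul a b := by
    rw [smul_mul_smul_comm, ← pow_add, ← Nat.cast_smul_eq_nsmul ℚ, smul_smul]
    congr 1
    have h : (((a+b).choose a : ℕ) : ℚ) * (a.factorial : ℕ) * (b.factorial : ℕ)
        = (((a+b).factorial : ℕ) : ℚ) := by
      exact_mod_cast congrArg (fun t : ℕ => (t : ℚ))
        (Nat.choose_symm_add ▸ Nat.add_choose_mul_factorial_mul_factorial a b)
    have hne : ∀ j : ℕ, (j.factorial : ℚ) ≠ 0 := fun j => by
      exact_mod_cast j.factorial_ne_zero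
    field_simp
    linarith [h]

theorem DQ_P_mem {k : ℕ} (hk : k ≠ 0) : DQ.P k ∈ DQ.W := by
  show (k.factorial : ℚ)⁻¹ • (X true : LL) ^ k ∈ WQ
  have := Xt_pow_mem hk
  simpa [Algebra.smul_def] using WQ.mul_mem_left _ this

theorem DQ_P_eq (a : ℕ) : DQ.P a = DQ.γ.dpow a (X true) := by
  show (a.factorial : ℚ)⁻¹ • (X true : LL) ^ a = (ratDP WQ).dpow a (X true)
  rw [ratDP_dpow_eq WQ Xt_mem]

theorem DQ_PQ (pq : ℕ × ℕ) :
    DQ.PQ pq = ((pq.1.factorial * pq.2.factorial : ℚ))⁻¹ •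
      ((X true : LL) ^ pq.1 * X false ^ pq.2) := by
  show (pq.1.factorial : ℚ)⁻¹ • (X true : LL) ^ pq.1 * (ratDP WQ).dpow pq.2 (X false) = _
  rw [ratDP_dpow_eq WQ Xf_mem, smul_mul_smul_comm, mul_inv]

/-- exponent bookkeeping -/
noncomputable def expo (pq : ℕ × ℕ) : Bool →₀ ℕ :=
  Finsupp.single true pq.1 + Finsupp.single false pq.2

theorem expo_inj : Function.Injective expo := by
  intro pq pq' h
  have h1 := congrFun (congrArg (fun f : Bool →₀ ℕ => (f : Bool → ℕ)) h) true
  have h2 := congrFun (congrArg (fun f : Bool →₀ ℕ => (f : Bool → ℕ)) h) false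
  simp [expo, Finsupp.single_apply] at h1 h2
  exact Prod.ext h1 h2

theorem coeff_PQ (pq pq' : ℕ × ℕ) :
    MvPolynomial.coeff (expo pq') (DQ.PQ pq) =
      if pq = pq' then ((pq.1.factorial * pq.2.factorial : ℚ))⁻¹ else 0 := by
  rw [DQ_PQ]
  rw [X_pow_eq_monomial, X_pow_eq_monomial, monomial_mul, mul_one]
  rw [MvPolynomial.coeff_smul, MvPolynomial.coeff_monomial]
  have : (Finsupp.single true pq.1 + Finsupp.single false pq.2) = expo pq := rfl
  rw [this]
  by_cases h : pq = pq'
  · rw [if_pos (h ▸ rfl), if_pos h, smul_eq_mul, mul_one]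
  · rw [if_neg (fun he => h (expo_inj he)), if_neg h, smul_zero]

theorem factorials_ne (pq : ℕ × ℕ) : ((pq.1.factorial * pq.2.factorial : ℚ)) ≠ 0 := by
  have h1 : (pq.1.factorial : ℚ) ≠ 0 := by exact_mod_cast pq.1.factorial_ne_zero
  have h2 : (pq.2.factorial : ℚ) ≠ 0 := by exact_mod_cast pq.2.factorial_ne_zero
  exact mul_ne_zero h1 h2

theorem coeff_evalD (nn : (ℕ × ℕ) →₀ ℕ) (pq : ℕ × ℕ) :
    MvPolynomial.coeff (expo pq) (DQ.evalD nn) =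
      (nn pq : ℚ) * ((pq.1.factorial * pq.2.factorial : ℚ))⁻¹ := by
  rw [show DQ.evalD nn = nn.sum fun pq c => c • DQ.PQ pq from Finsupp.liftAddHom_apply _ _]
  rw [Finsupp.sum, MvPolynomial.coeff_sum]
  rw [Finset.sum_eq_single pq]
  · rw [MvPolynomial.coeff_smul, coeff_PQ, if_pos rfl, nsmul_eq_mul]
  · intro b _ hb
    rw [MvPolynomial.coeff_smul, coeff_PQ, if_neg hb, smul_zero]
  · intro hpq
    rw [Finsupp.notMem_support_iff.mp hpq]
    simp
theorem evalD_DQ_inj (nn mm : (ℕ × ℕ) →₀ ℕ) (h : DQ.evalD nn = DQ.evalD mm) : nn = mm := by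
  ext pq
  have := congrArg (MvPolynomial.coeff (expo pq)) h
  rw [coeff_evalD, coeff_evalD] at this
  have h2 : (nn pq : ℚ) = mm pq :=
    mul_right_cancel₀ (inv_ne_zero (factorials_ne pq)) this
  exact_mod_cast h2

end RatInstance

section Keys

open MvPolynomial

noncomputable def adF (N : ℕ) : (ℕ × ℕ) →₀ ℕ :=
  ∑ pq ∈ antidiagonal N, Finsupp.single pq 1

theorem evalD_adF (N : ℕ) : D.evalD (adF N) = ∑ pq ∈ antidiagonal N, D.PQ pq := by
  rw [adF, map_sum]
  exact Finset.sum_congr rfl fun pq _ => by rw [evalD_single, one_smul]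

def TkF (k : ℕ) : Finset (ℕ × ℕ) := (antidiagonal k).filter (fun pq => pq.2 ≠ 0)

noncomputable def wF (k : ℕ) : (ℕ × ℕ) →₀ ℕ := ∑ pq ∈ TkF k, Finsupp.single pq 1

theorem adF_eq (k : ℕ) : adF k = Finsupp.single (k, 0) 1 + wF k := by
  rw [adF, wF, TkF]
  rw [← Finset.sum_filter_add_sum_filter_not (antidiagonal k) (fun pq => pq.2 ≠ 0)]
  rw [add_comm]
  congr 1
  have h : (antidiagonal k).filter (fun pq => ¬ pq.2 ≠ 0) = {(k, 0)} := by
    ext pq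
    simp only [Finset.mem_filter, Finset.HasAntidiagonal.mem_antidiagonal, Finset.mem_singleton, not_not,
      Prod.ext_iff]
    constructor
    · rintro ⟨h1, h2⟩; exact ⟨by omega, h2⟩
    · rintro ⟨h1, h2⟩; exact ⟨by omega, h2⟩
  rw [h, Finset.sum_singleton]

theorem PQ_right_zero (p : ℕ) : D.PQ (p, 0) = D.P p := by
  show D.P p * D.γ.dpow 0 D.v = _
  rw [D.γ.dpow_zero D.hv, mul_one]

theorem DQ_adF (N : ℕ) : DQ.evalD (adF N) = (ratDP WQ).dpow N (X true + X false) := by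
  rw [evalD_adF, (ratDP WQ).dpow_add (n := N) Xt_mem Xf_mem]
  refine Finset.sum_congr rfl fun pq _ => ?_
  rw [show DQ.PQ pq = DQ.P pq.1 * DQ.γ.dpow pq.2 DQ.v from rfl, DQ_P_eq]
  rfl

theorem key1 (m k : ℕ) {S : Type} [CommRing S] (D : SplitData S) :
    D.evalD (adF m) * D.evalD (adF k) = ((m + k).choose m) • D.evalD (adF (m + k)) := by
  have expand : ∀ {S' : Type} [CommRing S'] (D' : SplitData S'),
      D'.evalD (adF m) * D'.evalD (adF k)
        = D'.evalD (∑ ab ∈ antidiagonal m, mulShift ab 1 (adF k)) := by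
    intro S' _ D'
    rw [map_sum, evalD_adF, Finset.sum_mul]
    exact Finset.sum_congr rfl fun ab _ => by rw [evalD_mulShift, one_smul]
  have hQ : DQ.evalD (∑ ab ∈ antidiagonal m, mulShift ab 1 (adF k))
      = DQ.evalD (((m + k).choose m) • adF (m + k)) := by
    rw [← expand DQ, DQ_adF, DQ_adF, (ratDP WQ).mul_dpow (m := m) (n := k) XtXf_mem, map_nsmul, DQ_adF,
      nsmul_eq_mul]
  have heq := evalD_DQ_inj _ _ hQ
  rw [expand D, heq, map_nsmul]

theorem DQ_P_dpow {k : ℕ} (hk : k ≠ 0) (c : ℕ) :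
    Nat.uniformBell c k • DQ.P (c * k) = DQ.γ.dpow c (DQ.P k) := by
  show Nat.uniformBell c k • (((c * k).factorial : ℚ)⁻¹ • (X true : LL) ^ (c * k))
      = (ratDP WQ).dpow c ((k.factorial : ℚ)⁻¹ • (X true : LL) ^ k)
  have hm : ((k.factorial : ℚ)⁻¹ • (X true : LL) ^ k) ∈ WQ := DQ_P_mem hk
  rw [ratDP_dpow_eq WQ hm, smul_pow, ← pow_mul, smul_smul,
    ← Nat.cast_smul_eq_nsmul ℚ, smul_smul, show k * c = c * k by ring]
  congr 1
  have h2 : ((c.uniformBell k : ℕ) : ℚ) * ((k.factorial : ℕ) : ℚ) ^ c * ((c.factorial : ℕ) : ℚ)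
      = (((c * k).factorial : ℕ) : ℚ) := by
    exact_mod_cast congrArg (fun t : ℕ => (t : ℚ)) (Nat.uniformBell_mul_eq c hk)
  have hne : ∀ j : ℕ, (j.factorial : ℚ) ≠ 0 := fun j => by
    exact_mod_cast j.factorial_ne_zero
  rw [inv_pow]
  field_simp
  linarith [h2]

theorem wF_mem {S : Type} [CommRing S] (D : SplitData S) (k : ℕ) :
    D.evalD (wF k) ∈ D.W := by
  rw [wF, map_sum]
  refine Submodule.sum_mem _ fun pq hpq => ?_
  rw [evalD_single, one_smul]
  exact D.PQ_mem (mem_filter.mp hpq).2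

theorem key2 (m k : ℕ) (hk : k ≠ 0) {S : Type} [CommRing S] (D : SplitData S) :
    (∑ cd ∈ antidiagonal m, Nat.uniformBell cd.1 k •
        (D.P (cd.1 * k) * D.γ.dpow cd.2 (D.evalD (wF k))))
      = Nat.uniformBell m k • D.evalD (adF (m * k)) := by
  have hTk : ∀ pq ∈ TkF k, pq.2 ≠ 0 := fun pq h => (mem_filter.mp h).2
  choose nj hnj using fun d => sub_expand (TkF k) hTk (fun _ => 1) d
  have hwf : ∀ {S' : Type} [_i : CommRing S'] (D' : SplitData S') (d : ℕ),
      D'.γ.dpow d (D'.evalD (wF k)) = D'.evalD (nj d) := by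
    intro S' _i D' d
    rw [← hnj d D']
    congr 1
    rw [wF, map_sum]
    exact Finset.sum_congr rfl fun pq _ => by rw [evalD_single]
  have expand : ∀ {S' : Type} [CommRing S'] (D' : SplitData S'),
      (∑ cd ∈ antidiagonal m, Nat.uniformBell cd.1 k •
        (D'.P (cd.1 * k) * D'.γ.dpow cd.2 (D'.evalD (wF k))))
      = D'.evalD (∑ cd ∈ antidiagonal m,
          mulShift (cd.1 * k, 0) (Nat.uniformBell cd.1 k) (nj cd.2)) := by
    intro S' _ D'
    rw [map_sum]
    refine Finset.sum_congr rfl fun cd _ => ?_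
    rw [evalD_mulShift, ← hwf D' cd.2, PQ_right_zero, smul_mul_assoc]
  have hQ2 : DQ.evalD (∑ cd ∈ antidiagonal m,
        mulShift (cd.1 * k, 0) (Nat.uniformBell cd.1 k) (nj cd.2))
      = DQ.evalD (Nat.uniformBell m k • adF (m * k)) := by
    rw [← expand DQ]
    have hPkW : DQ.P k ∈ DQ.W := DQ_P_mem hk
    have hwW : DQ.evalD (wF k) ∈ DQ.W := wF_mem DQ k
    have step1 : (∑ cd ∈ antidiagonal m, Nat.uniformBell cd.1 k •
        (DQ.P (cd.1 * k) * DQ.γ.dpow cd.2 (DQ.evalD (wF k))))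
        = ∑ cd ∈ antidiagonal m,
          DQ.γ.dpow cd.1 (DQ.P k) * DQ.γ.dpow cd.2 (DQ.evalD (wF k)) := by
      refine Finset.sum_congr rfl fun cd _ => ?_
      rw [← DQ_P_dpow hk cd.1, smul_mul_assoc]
    rw [step1, ← DQ.γ.dpow_add (n := m) hPkW hwW]
    have hsplit : DQ.P k + DQ.evalD (wF k) = DQ.evalD (adF k) := by
      rw [adF_eq, map_add, evalD_single, one_smul, PQ_right_zero]
    rw [hsplit, DQ_adF]
    show (ratDP WQ).dpow m ((ratDP WQ).dpow k (X true + X false)) = _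
    rw [(ratDP WQ).dpow_comp (m := m) hk XtXf_mem, map_nsmul, DQ_adF, nsmul_eq_mul]
  have heq := evalD_DQ_inj _ _ hQ2
  rw [expand D, heq, map_nsmul]

end Keys

end SplitData

namespace CosimplicialCommRing

variable (X : CosimplicialCommRing)

/-- Total degeneration `Aⁿ → A⁰`. -/
noncomputable def sM (n : ℕ) : X.A n →+* X.A 0 := X.act (OrderHom.const _ (0 : Fin 1))

/-- Total coface (0th vertex) `A⁰ → Aⁿ`. -/
noncomputable def δM (n : ℕ) : X.A 0 →+* X.A n :=
  X.act (OrderHom.const _ (0 : Fin (n + 1)))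

/-- The vertex map `A⁰ → Aⁿ` at vertex `j`. -/
noncomputable def eM (n : ℕ) (j : Fin (n + 1)) : X.A 0 →+* X.A n :=
  X.act (OrderHom.const (Fin 1) j)

theorem eq_of_fin1 {m : ℕ} (g h : Fin (m + 1) →o Fin 1) : g = h :=
  OrderHom.ext _ _ (funext fun _ => Subsingleton.elim _ _)

theorem act_act {m n l : ℕ} (f : Fin (m + 1) →o Fin (n + 1))
    (g : Fin (n + 1) →o Fin (l + 1)) (x : X.A m) :
    X.act g (X.act f x) = X.act (g.comp f) x :=
  RingHom.congr_fun (X.act_comp f g) x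

theorem act_fin1 (g : Fin 1 →o Fin 1) (x : X.A 0) : X.act g x = x := by
  rw [eq_of_fin1 g OrderHom.id, X.act_id]
  rfl

theorem s_δ (n : ℕ) (a : X.A 0) : X.sM n (X.δM n a) = a := by
  rw [sM, δM, act_act]
  exact X.act_fin1 _ a

theorem s_act {m n : ℕ} (g : Fin (m + 1) →o Fin (n + 1)) (x : X.A m) :
    X.sM n (X.act g x) = X.sM m x := by
  rw [sM, act_act]
  exact congrFun (congrArg (fun h => (X.act h : X.A m → X.A 0)) (eq_of_fin1 _ _)) x

theorem sM_zero (x : X.A 0) : X.sM 0 x = x := X.act_fin1 _ x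

theorem δM_zero (x : X.A 0) : X.δM 0 x = x := X.act_fin1 _ x

theorem mem_V {n : ℕ} {x : X.A n} : x ∈ X.V n ↔ X.sM n x = 0 := RingHom.mem_ker

theorem sub_δ_mem_V (n : ℕ) (x : X.A n) : x - X.δM n (X.sM n x) ∈ X.V n := by
  rw [mem_V, map_sub, s_δ, sub_self]

theorem Jext_eq (J : Ideal (X.A 0)) (n : ℕ) :
    X.Jext J n = Ideal.comap (X.sM n) J := by
  apply le_antisymm
  · apply sup_le
    · rw [Ideal.span_le]
      rintro _ ⟨j, hj, rfl⟩
      show X.sM n (X.δM n j) ∈ J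
      rw [s_δ]
      exact hj
    · intro x hx
      show X.sM n x ∈ J
      rw [X.mem_V.mp hx]
      exact J.zero_mem
  · intro x hx
    have hx' : X.sM n x ∈ J := hx
    have : x = X.δM n (X.sM n x) + (x - X.δM n (X.sM n x)) := by ring
    rw [this]
    refine Submodule.add_mem _ ?_ ?_
    · exact Ideal.mem_sup_left (Ideal.subset_span ⟨_, hx', rfl⟩)
    · exact Ideal.mem_sup_right (X.sub_δ_mem_V n x)

theorem mem_Jext {J : Ideal (X.A 0)} {n : ℕ} {x : X.A n} :
    x ∈ X.Jext J n ↔ X.sM n x ∈ J := by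
  rw [Jext_eq]
  rfl

section Dval

variable (J : Ideal (X.A 0)) (γJ : DividedPowers J) (γV : ∀ n, DividedPowers (X.V n))

/-- The candidate universal divided power function on `Jext J n`. -/
noncomputable def dval (n k : ℕ) (x : X.A n) : X.A n :=
  ∑ pq ∈ antidiagonal k,
    X.δM n (γJ.dpow pq.1 (X.sM n x)) * (γV n).dpow pq.2 (x - X.δM n (X.sM n x))

/-- The split data attached to an element of `Jext J n`. -/
noncomputable def SD (n : ℕ) {x : X.A n} (hx : X.sM n x ∈ J) : SplitData (X.A n) where
  W := X.V n
  γ := γV n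
  P a := X.δM n (γJ.dpow a (X.sM n x))
  v := x - X.δM n (X.sM n x)
  hv := X.sub_δ_mem_V n x
  P_zero := by beta_reduce; rw [γJ.dpow_zero hx, map_one]
  P_mul a b := by
    beta_reduce
    rw [← map_mul, γJ.mul_dpow (m := a) (n := b) hx, ← nsmul_eq_mul, map_nsmul]

theorem dval_eq_evalD (n k : ℕ) {x : X.A n} (hx : X.sM n x ∈ J) :
    X.dval J γJ γV n k x = (X.SD J γJ γV n hx).evalD (SplitData.adF k) := by
  rw [SplitData.evalD_adF]
  rfl

/-- Exponential series of the `J`-part. -/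
noncomputable def jser (n : ℕ) (f : X.A 0) : PowerSeries (X.A n) :=
  PowerSeries.mk fun a => X.δM n (γJ.dpow a f)

/-- Exponential series of the `V`-part. -/
noncomputable def vser (n : ℕ) (w : X.A n) : PowerSeries (X.A n) :=
  PowerSeries.mk fun b => (γV n).dpow b w

theorem dval_series (n : ℕ) (x : X.A n) :
    PowerSeries.mk (fun k => X.dval J γJ γV n k x) =
      X.jser J γJ n (X.sM n x) * X.vser γV n (x - X.δM n (X.sM n x)) := by
  ext k
  rw [PowerSeries.coeff_mk, PowerSeries.coeff_mul, dval]
  exact Finset.sum_congr rfl fun pq _ => by rw [jser, vser, PowerSeries.coeff_mk,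
    PowerSeries.coeff_mk]

theorem jser_eq (n : ℕ) (f : X.A 0) :
    X.jser J γJ n f = PowerSeries.map (X.δM n) (γJ.exp f) := by
  ext a
  rw [jser, PowerSeries.coeff_mk, PowerSeries.coeff_map, DividedPowers.exp,
    PowerSeries.coeff_mk]

theorem jser_add (n : ℕ) {f g : X.A 0} (hf : f ∈ J) (hg : g ∈ J) :
    X.jser J γJ n (f + g) = X.jser J γJ n f * X.jser J γJ n g := by
  rw [jser_eq, jser_eq, jser_eq, ← map_mul, γJ.exp_add hf hg]

theorem vser_add (n : ℕ) {v w : X.A n} (hv : v ∈ X.V n) (hw : w ∈ X.V n) :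
    X.vser γV n (v + w) = X.vser γV n v * X.vser γV n w := by
  have h := (γV n).exp_add hv hw
  have e1 : ∀ u : X.A n, X.vser γV n u = (γV n).exp u := fun u => rfl
  rw [e1, e1, e1, h]

theorem vser_smul (n : ℕ) (c : X.A n) {w : X.A n} (hw : w ∈ X.V n) :
    X.vser γV n (c * w) = PowerSeries.rescale c (X.vser γV n w) := by
  ext b
  simp only [vser, PowerSeries.coeff_mk, PowerSeries.coeff_rescale]
  exact (γV n).dpow_mul (n := b) hw

theorem jser_rescale (n : ℕ) (r : X.A 0) {f : X.A 0} (hf : f ∈ J) :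
    X.jser J γJ n (r * f) = PowerSeries.rescale (X.δM n r) (X.jser J γJ n f) := by
  ext a
  rw [jser, PowerSeries.coeff_mk, PowerSeries.coeff_rescale, jser, PowerSeries.coeff_mk,
    γJ.dpow_mul (n := a) hf, map_mul, map_pow]

theorem keyscale (n : ℕ) (c : X.A n) {f : X.A 0} (hf : f ∈ J) :
    PowerSeries.rescale (X.δM n (X.sM n c)) (X.jser J γJ n f) *
      X.vser γV n ((c - X.δM n (X.sM n c)) * X.δM n f)
    = PowerSeries.rescale c (X.jser J γJ n f) := by
  set r := X.δM n (X.sM n c) with hr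
  set u := c - r with hu
  have huV : u ∈ X.V n := by
    rw [hu, mem_V, map_sub, hr, s_δ, sub_self]
  ext p
  rw [PowerSeries.coeff_mul]
  have hterm : ∀ pq : ℕ × ℕ, pq ∈ antidiagonal p →
      (PowerSeries.coeff pq.1) (PowerSeries.rescale r (X.jser J γJ n f)) *
        (PowerSeries.coeff pq.2) (X.vser γV n (u * X.δM n f))
      = ((p.choose pq.1 : X.A n)) * (r ^ pq.1 * u ^ pq.2 * X.δM n (γJ.dpow p f)) := by
    intro pq hpq
    have hab : pq.1 + pq.2 = p := Finset.HasAntidiagonal.mem_antidiagonal.mp hpq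
    rw [PowerSeries.coeff_rescale, jser, PowerSeries.coeff_mk, vser, PowerSeries.coeff_mk]
    rw [show u * X.δM n f = X.δM n f * u by ring, (γV n).dpow_mul (n := pq.2) huV]
    -- δ(f^{[a]}) * (δ f)^b = b! * C(p,a) * δ(f^{[p]})
    have h1 : X.δM n (γJ.dpow pq.1 f) * (X.δM n f) ^ pq.2
        = (pq.2.factorial : X.A n) * ((p.choose pq.1 : X.A n) * X.δM n (γJ.dpow p f)) := by
      rw [← map_pow, ← map_mul, ← γJ.factorial_mul_dpow_eq_pow (n := pq.2) hf]
      rw [show γJ.dpow pq.1 f * ((pq.2.factorial : X.A 0) * γJ.dpow pq.2 f)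
          = (pq.2.factorial : X.A 0) * (γJ.dpow pq.1 f * γJ.dpow pq.2 f) by ring]
      rw [γJ.mul_dpow (m := pq.1) (n := pq.2) hf, hab]
      push_cast
      rw [map_mul, map_mul, map_natCast, map_natCast]
    have h2 : (pq.2.factorial : X.A n) * (γV n).dpow pq.2 u = u ^ pq.2 :=
      (γV n).factorial_mul_dpow_eq_pow (n := pq.2) huV
    calc r ^ pq.1 * X.δM n (γJ.dpow pq.1 f) * ((X.δM n f) ^ pq.2 * (γV n).dpow pq.2 u)
        = r ^ pq.1 * (X.δM n (γJ.dpow pq.1 f) * (X.δM n f) ^ pq.2) * (γV n).dpow pq.2 u := by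
          ring
      _ = r ^ pq.1 * ((pq.2.factorial : X.A n) *
            ((p.choose pq.1 : X.A n) * X.δM n (γJ.dpow p f))) * (γV n).dpow pq.2 u := by
          rw [h1]
      _ = (p.choose pq.1 : X.A n) * (r ^ pq.1 *
            ((pq.2.factorial : X.A n) * (γV n).dpow pq.2 u) * X.δM n (γJ.dpow p f)) := by
          ring
      _ = _ := by rw [h2]; try ring
  rw [Finset.sum_congr rfl hterm]
  rw [PowerSeries.coeff_rescale, jser, PowerSeries.coeff_mk]
  have hbin : (∑ pq ∈ antidiagonal p, (p.choose pq.1 : X.A n) * (r ^ pq.1 * u ^ pq.2))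
      = c ^ p := by
    rw [Finset.Nat.sum_antidiagonal_eq_sum_range_succ_mk]
    have := add_pow r u p
    rw [show r + u = c by rw [hu]; ring] at this
    rw [this]
    exact Finset.sum_congr rfl fun i _ => by ring
  calc ∑ pq ∈ antidiagonal p, (p.choose pq.1 : X.A n) *
        (r ^ pq.1 * u ^ pq.2 * X.δM n (γJ.dpow p f))
      = (∑ pq ∈ antidiagonal p, (p.choose pq.1 : X.A n) * (r ^ pq.1 * u ^ pq.2)) *
          X.δM n (γJ.dpow p f) := by
        rw [Finset.sum_mul]
        exact Finset.sum_congr rfl fun pq _ => by ring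
    _ = c ^ p * X.δM n (γJ.dpow p f) := by rw [hbin]

theorem dval_null (n k : ℕ) {x : X.A n} (hx : x ∉ X.Jext J n) :
    X.dval J γJ γV n k x = 0 := by
  have hs : X.sM n x ∉ J := fun h => hx (X.mem_Jext.mpr h)
  refine Finset.sum_eq_zero fun pq _ => ?_
  rw [γJ.dpow_null hs, map_zero, zero_mul]

theorem dval_zero (n : ℕ) {x : X.A n} (hx : x ∈ X.Jext J n) :
    X.dval J γJ γV n 0 x = 1 := by
  have hs : X.sM n x ∈ J := X.mem_Jext.mp hx
  rw [dval, Finset.Nat.antidiagonal_zero, Finset.sum_singleton]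
  rw [γJ.dpow_zero hs, map_one, (γV n).dpow_zero (X.sub_δ_mem_V n x), one_mul]

theorem dval_one (n : ℕ) {x : X.A n} (hx : x ∈ X.Jext J n) :
    X.dval J γJ γV n 1 x = x := by
  have hs : X.sM n x ∈ J := X.mem_Jext.mp hx
  rw [dval, show (antidiagonal 1 : Finset (ℕ × ℕ)) = {(0, 1), (1, 0)} by decide]
  rw [Finset.sum_insert (by decide), Finset.sum_singleton]
  rw [γJ.dpow_zero hs, γJ.dpow_one hs, map_one, one_mul,
    (γV n).dpow_one (X.sub_δ_mem_V n x), (γV n).dpow_zero (X.sub_δ_mem_V n x), mul_one]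
  ring

theorem dval_mem (n k : ℕ) (hk : k ≠ 0) {x : X.A n} (hx : x ∈ X.Jext J n) :
    X.dval J γJ γV n k x ∈ X.Jext J n := by
  have hs : X.sM n x ∈ J := X.mem_Jext.mp hx
  refine Submodule.sum_mem _ fun pq hpq => ?_
  by_cases h1 : pq.1 = 0
  · have h2 : pq.2 ≠ 0 := by
      have := Finset.HasAntidiagonal.mem_antidiagonal.mp hpq
      omega
    exact Ideal.mul_mem_left _ _
      (Ideal.mem_sup_right ((γV n).dpow_mem h2 (X.sub_δ_mem_V n x)))
  · exact Ideal.mul_mem_right _ _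
      (Ideal.mem_sup_left (Ideal.subset_span ⟨_, γJ.dpow_mem h1 hs, rfl⟩))

theorem dval_add (n k : ℕ) {x y : X.A n} (hx : x ∈ X.Jext J n) (hy : y ∈ X.Jext J n) :
    X.dval J γJ γV n k (x + y) =
      ∑ pq ∈ antidiagonal k, X.dval J γJ γV n pq.1 x * X.dval J γJ γV n pq.2 y := by
  have hsx : X.sM n x ∈ J := X.mem_Jext.mp hx
  have hsy : X.sM n y ∈ J := X.mem_Jext.mp hy
  have hser : PowerSeries.mk (fun k => X.dval J γJ γV n k (x + y)) =
      PowerSeries.mk (fun k => X.dval J γJ γV n k x) *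
        PowerSeries.mk (fun k => X.dval J γJ γV n k y) := by
    rw [dval_series, dval_series, dval_series]
    have e1 : X.sM n (x + y) = X.sM n x + X.sM n y := map_add _ _ _
    have e2 : x + y - X.δM n (X.sM n (x + y)) =
        (x - X.δM n (X.sM n x)) + (y - X.δM n (X.sM n y)) := by
      rw [e1, map_add]; ring
    rw [e2, e1, X.jser_add J γJ n hsx hsy,
      X.vser_add γV n (X.sub_δ_mem_V n x) (X.sub_δ_mem_V n y)]
    ring
  have := congrArg (PowerSeries.coeff k) hser
  rw [PowerSeries.coeff_mk, PowerSeries.coeff_mul] at this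
  rw [this]
  exact Finset.sum_congr rfl fun pq _ => by rw [PowerSeries.coeff_mk, PowerSeries.coeff_mk]

theorem dval_smul (n k : ℕ) {c x : X.A n} (hx : x ∈ X.Jext J n) :
    X.dval J γJ γV n k (c * x) = c ^ k * X.dval J γJ γV n k x := by
  have hsx : X.sM n x ∈ J := X.mem_Jext.mp hx
  set f := X.sM n x with hf
  set r := X.δM n (X.sM n c) with hr
  set u := c - r with hu
  have huV : u ∈ X.V n := by rw [hu, mem_V, map_sub, hr, s_δ, sub_self]
  have hser : PowerSeries.mk (fun k => X.dval J γJ γV n k (c * x)) =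
      PowerSeries.rescale c (PowerSeries.mk (fun k => X.dval J γJ γV n k x)) := by
    rw [dval_series, dval_series]
    have e1 : X.sM n (c * x) = X.sM n c * f := map_mul _ _ _
    have e2 : c * x - X.δM n (X.sM n (c * x)) =
        u * X.δM n f + c * (x - X.δM n f) := by
      rw [e1, map_mul, hu, hr]; ring
    rw [e2, e1, X.jser_rescale J γJ n (X.sM n c) hsx]
    rw [X.vser_add γV n (Ideal.mul_mem_right _ _ huV)
      (Ideal.mul_mem_left _ _ (X.sub_δ_mem_V n x))]
    rw [X.vser_smul γV n c (X.sub_δ_mem_V n x)]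
    rw [map_mul]
    rw [show PowerSeries.rescale (X.δM n (X.sM n c)) (X.jser J γJ n f) *
          (X.vser γV n (u * X.δM n f) * PowerSeries.rescale c (X.vser γV n (x - X.δM n f)))
        = PowerSeries.rescale (X.δM n (X.sM n c)) (X.jser J γJ n f) *
          X.vser γV n (u * X.δM n f) * PowerSeries.rescale c (X.vser γV n (x - X.δM n f))
        by ring]
    rw [← hr, X.keyscale J γJ γV n c hsx]
  have := congrArg (PowerSeries.coeff k) hser
  rw [PowerSeries.coeff_mk, PowerSeries.coeff_rescale, PowerSeries.coeff_mk] at this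
  exact this

theorem dval_mul_dval (n m k : ℕ) {x : X.A n} (hx : x ∈ X.Jext J n) :
    X.dval J γJ γV n m x * X.dval J γJ γV n k x =
      ((m + k).choose m : X.A n) * X.dval J γJ γV n (m + k) x := by
  have hs : X.sM n x ∈ J := X.mem_Jext.mp hx
  rw [dval_eq_evalD X J γJ γV n m hs, dval_eq_evalD X J γJ γV n k hs,
    dval_eq_evalD X J γJ γV n (m + k) hs, SplitData.key1 m k, nsmul_eq_mul]

theorem sM_dval (n k : ℕ) {x : X.A n} (hs : X.sM n x ∈ J) :
    X.sM n (X.dval J γJ γV n k x) = γJ.dpow k (X.sM n x) := by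
  rw [dval, map_sum]
  rw [Finset.sum_eq_single_of_mem (k, 0) (by rw [Finset.HasAntidiagonal.mem_antidiagonal]; omega)]
  · rw [map_mul, s_δ, (γV n).dpow_zero (X.sub_δ_mem_V n x), map_one, mul_one]
  · intro pq hpq hne
    have h2 : pq.2 ≠ 0 := by
      have := Finset.HasAntidiagonal.mem_antidiagonal.mp hpq
      rcases Nat.eq_zero_or_pos pq.2 with h | h
      · exfalso; apply hne; ext
        · omega
        · exact h
      · omega
    rw [map_mul]
    have : X.sM n ((γV n).dpow pq.2 (x - X.δM n (X.sM n x))) = 0 :=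
      X.mem_V.mp ((γV n).dpow_mem h2 (X.sub_δ_mem_V n x))
    rw [this, mul_zero]

theorem dval_comp (n m k : ℕ) (hk : k ≠ 0) {x : X.A n} (hx : x ∈ X.Jext J n) :
    X.dval J γJ γV n m (X.dval J γJ γV n k x) =
      (Nat.uniformBell m k : X.A n) * X.dval J γJ γV n (m * k) x := by
  have hs : X.sM n x ∈ J := X.mem_Jext.mp hx
  set D := X.SD J γJ γV n hs with hD
  have hsd : X.sM n (X.dval J γJ γV n k x) = γJ.dpow k (X.sM n x) := X.sM_dval J γJ γV n k hs
  have hδ : X.dval J γJ γV n k x - X.δM n (γJ.dpow k (X.sM n x)) = D.evalD (SplitData.wF k) := by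
    rw [dval_eq_evalD X J γJ γV n k hs, SplitData.adF_eq, map_add, SplitData.evalD_single,
      one_smul, SplitData.PQ_right_zero]
    show D.P k + D.evalD (SplitData.wF k) - D.P k = _
    ring
  rw [dval]
  rw [hsd]
  have hstep : ∀ pq : ℕ × ℕ, pq ∈ antidiagonal m →
      X.δM n (γJ.dpow pq.1 (γJ.dpow k (X.sM n x))) *
        (γV n).dpow pq.2 (X.dval J γJ γV n k x - X.δM n (γJ.dpow k (X.sM n x)))
      = Nat.uniformBell pq.1 k • (D.P (pq.1 * k) * D.γ.dpow pq.2 (D.evalD (SplitData.wF k))) := by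
    intro pq _
    rw [hδ, γJ.dpow_comp (m := pq.1) hk hs, ← nsmul_eq_mul, map_nsmul, smul_mul_assoc]
    rfl
  rw [Finset.sum_congr rfl hstep, SplitData.key2 m k hk D,
    dval_eq_evalD X J γJ γV n (m * k) hs, nsmul_eq_mul]

/-- The divided power structure on the cosimplicial ideal generated by `J`. -/
noncomputable def gammaExt (n : ℕ) : DividedPowers (X.Jext J n) where
  dpow k x := X.dval J γJ γV n k x
  dpow_null {k x} hx := X.dval_null J γJ γV n k hx
  dpow_zero {x} hx := X.dval_zero J γJ γV n hx
  dpow_one {x} hx := X.dval_one J γJ γV n hx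
  dpow_mem {k x} hk hx := X.dval_mem J γJ γV n k hk hx
  dpow_add k {x y} hx hy := X.dval_add J γJ γV n k hx hy
  dpow_mul k {c x} hx := X.dval_smul J γJ γV n k hx
  mul_dpow m k {x} hx := X.dval_mul_dval J γJ γV n m k hx
  dpow_comp m {k x} hk hx := X.dval_comp J γJ γV n m k hk hx

theorem diff_mem_V (g : X.A 0) : X.diff g ∈ X.V 1 := by
  rw [mem_V, diff, map_sub, face1, face0]
  have h1 : X.sM 1 (X.act (OrderHom.const (Fin 1) (1 : Fin 2)) g) = g := by
    rw [X.s_act, sM_zero]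
  have h2 : X.sM 1 (X.act (OrderHom.const (Fin 1) (0 : Fin 2)) g) = g := by
    rw [X.s_act, sM_zero]
  rw [h1, h2, sub_self]

theorem diff_normalized (g : X.A 0) : X.diff g ∈ X.normalized 1 := by
  intro k hk g' _
  have hk0 : k = 0 := by omega
  subst hk0
  rw [diff, map_sub, face1, face0, act_act, act_act, eq_of_fin1 (g'.comp _) (g'.comp _),
    sub_self]

theorem face0_eq_δM : X.face0 = X.δM 1 := rfl

variable {X}

theorem twoterm (hγV_norm : ∀ m : ℕ, 0 < m → ∀ c ∈ X.normalized m, ∀ k : ℕ, 1 < k →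
      (γV m).dpow k c = 0) {g : X.A 0} (hg : g ∈ J) (k : ℕ) :
    ∑ pq ∈ antidiagonal (k + 1), X.face0 (γJ.dpow pq.1 g) * (γV 1).dpow pq.2 (X.diff g)
      = X.face0 (γJ.dpow (k + 1) g) + X.face0 (γJ.dpow k g) * X.diff g := by
  rw [Finset.Nat.sum_antidiagonal_eq_sum_range_succ_mk]
  rw [Finset.sum_range_succ, Finset.sum_range_succ]
  have hrest : (∑ i ∈ range k,
      X.face0 (γJ.dpow (i, k + 1 - i).1 g) * (γV 1).dpow (i, k + 1 - i).2 (X.diff g)) = 0 := by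
    refine Finset.sum_eq_zero fun i hi => ?_
    have hi' : i < k := Finset.mem_range.mp hi
    rw [hγV_norm 1 one_pos _ (X.diff_normalized g) (k + 1 - i) (by omega), mul_zero]
  rw [hrest, zero_add]
  have e1 : k + 1 - k = 1 := by omega
  have e2 : k + 1 - (k + 1) = 0 := by omega
  rw [e1, e2, (γV 1).dpow_one (X.diff_mem_V g), (γV 1).dpow_zero (X.diff_mem_V g), mul_one]
  ring

theorem claim1 (hd : ∀ f ∈ J, ∀ n : ℕ,
      X.diff (γJ.dpow (n + 1) f) = X.face0 (γJ.dpow n f) * X.diff f)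
    (hγV_norm : ∀ m : ℕ, 0 < m → ∀ c ∈ X.normalized m, ∀ k : ℕ, 1 < k →
      (γV m).dpow k c = 0)
    {g : X.A 0} (hg : g ∈ J) (k : ℕ) :
    X.face1 (γJ.dpow k g)
      = ∑ pq ∈ antidiagonal k, X.face0 (γJ.dpow pq.1 g) * (γV 1).dpow pq.2 (X.diff g) := by
  cases k with
  | zero =>
    rw [Finset.Nat.antidiagonal_zero, Finset.sum_singleton, γJ.dpow_zero hg, map_one,
      map_one, (γV 1).dpow_zero (X.diff_mem_V g), one_mul]
  | succ k =>
    rw [twoterm J γJ γV hγV_norm hg k]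
    have h1 : X.face1 (γJ.dpow (k + 1) g)
        = X.face0 (γJ.dpow (k + 1) g) + X.diff (γJ.dpow (k + 1) g) := by
      rw [diff]; ring
    rw [h1, hd g hg k]

/-- The order-preserving map `[1] → [n]` sending `0 ↦ 0`, `1 ↦ j`. -/
def homJ (n : ℕ) (j : Fin (n + 1)) : Fin 2 →o Fin (n + 1) where
  toFun i := if i = 0 then 0 else j
  monotone' := by
    intro a b hab
    dsimp only
    split_ifs with ha hb hb
    · exact le_refl 0
    · exact Fin.zero_le _
    · exact absurd (Fin.le_zero_iff.mp (hb ▸ hab)) ha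
    · exact le_refl j

theorem homJ_comp1 (n : ℕ) (j : Fin (n + 1)) :
    (homJ n j).comp (OrderHom.const (Fin 1) (1 : Fin 2)) = OrderHom.const (Fin 1) j := by
  refine OrderHom.ext _ _ (funext fun i => ?_)
  show (if (1 : Fin 2) = 0 then 0 else j) = j
  norm_num

theorem homJ_comp0 (n : ℕ) (j : Fin (n + 1)) :
    (homJ n j).comp (OrderHom.const (Fin 1) (0 : Fin 2)) = OrderHom.const (Fin 1) (0 : Fin (n+1)) := by
  refine OrderHom.ext _ _ (funext fun i => ?_)
  show (if (0 : Fin 2) = 0 then (0 : Fin (n+1)) else j) = 0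
  norm_num

theorem act_homJ_diff (n : ℕ) (j : Fin (n + 1)) (g : X.A 0) :
    X.act (homJ n j) (X.diff g) = X.eM n j g - X.δM n g := by
  rw [diff, map_sub, face1, face0, act_act, act_act, homJ_comp1, homJ_comp0]
  rfl

theorem claim2
    (hγV_maps : ∀ {m n : ℕ} (f : Fin (m + 1) →o Fin (n + 1)),
      (∀ x ∈ X.V m, X.act f x ∈ X.V n) ∧
      (∀ (k : ℕ), ∀ x ∈ X.V m, (γV n).dpow k (X.act f x) = X.act f ((γV m).dpow k x)))
    (hd : ∀ f ∈ J, ∀ n : ℕ,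
      X.diff (γJ.dpow (n + 1) f) = X.face0 (γJ.dpow n f) * X.diff f)
    (hγV_norm : ∀ m : ℕ, 0 < m → ∀ c ∈ X.normalized m, ∀ k : ℕ, 1 < k →
      (γV m).dpow k c = 0)
    {g : X.A 0} (hg : g ∈ J) (n : ℕ) (j : Fin (n + 1)) (k : ℕ) :
    X.eM n j (γJ.dpow k g)
      = ∑ pq ∈ antidiagonal k,
          X.δM n (γJ.dpow pq.1 g) * (γV n).dpow pq.2 (X.eM n j g - X.δM n g) := by
  have h := congrArg (X.act (homJ n j)) (claim1 J γJ γV hd hγV_norm hg k)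
  rw [map_sum] at h
  have hL : X.act (homJ n j) (X.face1 (γJ.dpow k g)) = X.eM n j (γJ.dpow k g) := by
    rw [face1, act_act, homJ_comp1]; rfl
  rw [hL] at h
  rw [h]
  refine Finset.sum_congr rfl fun pq _ => ?_
  rw [map_mul]
  have h1 : X.act (homJ n j) (X.face0 (γJ.dpow pq.1 g)) = X.δM n (γJ.dpow pq.1 g) := by
    rw [face0, act_act, homJ_comp0]; rfl
  have h2 : X.act (homJ n j) ((γV 1).dpow pq.2 (X.diff g))
      = (γV n).dpow pq.2 (X.eM n j g - X.δM n g) := by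
    rw [← act_homJ_diff n j g]
    exact ((hγV_maps (homJ n j)).2 pq.2 (X.diff g) (X.diff_mem_V g)).symm
  rw [h1, h2]

theorem compat
    (hγV_maps : ∀ {m n : ℕ} (f : Fin (m + 1) →o Fin (n + 1)),
      (∀ x ∈ X.V m, X.act f x ∈ X.V n) ∧
      (∀ (k : ℕ), ∀ x ∈ X.V m, (γV n).dpow k (X.act f x) = X.act f ((γV m).dpow k x)))
    (hd : ∀ f ∈ J, ∀ n : ℕ,
      X.diff (γJ.dpow (n + 1) f) = X.face0 (γJ.dpow n f) * X.diff f)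
    (hγV_norm : ∀ m : ℕ, 0 < m → ∀ c ∈ X.normalized m, ∀ k : ℕ, 1 < k →
      (γV m).dpow k c = 0)
    {m n : ℕ} (g : Fin (m + 1) →o Fin (n + 1)) (k : ℕ) {x : X.A m}
    (hx : x ∈ X.Jext J m) :
    X.dval J γJ γV n k (X.act g x) = X.act g (X.dval J γJ γV m k x) := by
  have hfJ : X.sM m x ∈ J := X.mem_Jext.mp hx
  set f := X.sM m x with hf
  set j := g 0 with hj
  set v' := X.act g (x - X.δM m f) with hv'def
  set dj := X.eM n j f - X.δM n f with hdj
  have hv' : v' ∈ X.V n := (hγV_maps g).1 _ (X.sub_δ_mem_V m x)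
  have hdjV : dj ∈ X.V n := by
    rw [hdj, mem_V, map_sub]
    have : X.sM n (X.eM n j f) = f := by rw [eM, X.s_act, sM_zero]
    rw [this, s_δ, sub_self]
  have hcomp0 : ∀ y : X.A 0, X.act g (X.δM m y) = X.eM n j y := by
    intro y
    rw [δM, act_act]
    rfl
  have hsg : X.sM n (X.act g x) = f := X.s_act g x
  have hdecomp : X.act g x - X.δM n f = dj + v' := by
    have hh : X.act g x = X.eM n j f + v' := by
      rw [hv'def, ← hcomp0 f, ← map_add]
      congr 1
      ring
    rw [hh, hdj]
    ring
  -- the "twisted exponential" series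
  have hE : X.jser J γJ n f * X.vser γV n dj
      = PowerSeries.mk (fun a => X.eM n j (γJ.dpow a f)) := by
    ext a
    rw [PowerSeries.coeff_mul, PowerSeries.coeff_mk]
    rw [claim2 J γJ γV hγV_maps hd hγV_norm hfJ n j a]
    exact Finset.sum_congr rfl fun pq _ => by
      rw [jser, vser, PowerSeries.coeff_mk, PowerSeries.coeff_mk]
  have hser : PowerSeries.mk (fun a => X.dval J γJ γV n a (X.act g x))
      = PowerSeries.mk (fun a => X.eM n j (γJ.dpow a f)) * X.vser γV n v' := by
    rw [dval_series, hsg, hdecomp, X.vser_add γV n hdjV hv', ← hE]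
    ring
  have hcoeff := congrArg (PowerSeries.coeff k) hser
  rw [PowerSeries.coeff_mk, PowerSeries.coeff_mul] at hcoeff
  rw [hcoeff, dval, map_sum]
  refine Finset.sum_congr rfl fun pq _ => ?_
  rw [map_mul, hcomp0, ← hf]
  have h2 : X.act g ((γV m).dpow pq.2 (x - X.δM m f)) = (γV n).dpow pq.2 v' :=
    ((hγV_maps g).2 pq.2 _ (X.sub_δ_mem_V m x)).symm
  rw [h2, PowerSeries.coeff_mk, vser, PowerSeries.coeff_mk]

theorem dval_level0 (k : ℕ) {x : X.A 0} (hx : x ∈ J) :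
    X.dval J γJ γV 0 k x = γJ.dpow k x := by
  rw [dval]
  rw [Finset.sum_eq_single_of_mem (k, 0) (by rw [Finset.HasAntidiagonal.mem_antidiagonal]; omega)]
  · simp only [sM_zero, δM_zero]
    rw [sub_self, (γV 0).dpow_zero (Submodule.zero_mem _), mul_one]
  · intro pq hpq hne
    rcases pq with ⟨a, b⟩
    have hab := Finset.HasAntidiagonal.mem_antidiagonal.mp hpq
    have h2 : b ≠ 0 := by
      rintro rfl
      refine hne ?_
      simp only [Prod.mk.injEq]
      constructor
      · simp at hab; omega
      · trivial
    simp only [sM_zero, δM_zero]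
    rw [sub_self, (γV 0).dpow_eval_zero h2, mul_zero]

theorem dval_V (n k : ℕ) {v : X.A n} (hv : v ∈ X.V n) :
    X.dval J γJ γV n k v = (γV n).dpow k v := by
  rw [dval]
  have hs0 : X.sM n v = 0 := X.mem_V.mp hv
  rw [Finset.sum_eq_single_of_mem (0, k) (by rw [Finset.HasAntidiagonal.mem_antidiagonal]; omega)]
  · rw [hs0, γJ.dpow_zero J.zero_mem, map_one, one_mul, map_zero, sub_zero]
  · intro pq hpq hne
    rcases pq with ⟨a, b⟩
    have hab := Finset.HasAntidiagonal.mem_antidiagonal.mp hpq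
    have h1 : a ≠ 0 := by
      rintro rfl
      refine hne ?_
      simp only [Prod.mk.injEq]
      constructor
      · trivial
      · simp at hab; omega
    rw [hs0, γJ.dpow_eval_zero h1, map_zero, zero_mul]

end Dval

end CosimplicialCommRing

theorem pd_compatibility_iff_d_dpow
    (X : CosimplicialCommRing)
    -- shuffle-product input (as in STATEMENT 7)
    (hshuffle : ∀ {m m' n : ℕ}
      (e : Fin (m + 1) →o Fin (n + 1)) (e' : Fin (m' + 1) →o Fin (n + 1)),
      StrictMono e → StrictMono e' → e 0 = 0 → e' 0 = 0 →
      (∃ (a : Fin (m + 1)) (b : Fin (m' + 1)), a ≠ 0 ∧ b ≠ 0 ∧ e a = e' b) →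
      ∀ c ∈ X.normalized m, ∀ c' ∈ X.normalized m',
        X.act e c * X.act e' c' = 0)
    -- the canonical pd structure on `V*` (STATEMENT 7)
    (γV : ∀ n, DividedPowers (X.V n))
    (hγV_maps : ∀ {m n : ℕ} (f : Fin (m + 1) →o Fin (n + 1)),
      (∀ x ∈ X.V m, X.act f x ∈ X.V n) ∧
      (∀ (k : ℕ), ∀ x ∈ X.V m, (γV n).dpow k (X.act f x) = X.act f ((γV m).dpow k x)))
    (hγV_norm : ∀ m : ℕ, 0 < m → ∀ c ∈ X.normalized m, ∀ k : ℕ, 1 < k →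
      (γV m).dpow k c = 0)
    -- a pd ideal in `A⁰`
    (J : Ideal (X.A 0)) (γJ : DividedPowers J) :
    -- compatibility: a common pd extension to the cosimplicial ideal generated by `J`
    (∃ γ' : ∀ n, DividedPowers (X.Jext J n),
      (∀ {m n : ℕ} (f : Fin (m + 1) →o Fin (n + 1)),
        (∀ x ∈ X.Jext J m, X.act f x ∈ X.Jext J n) ∧
        (∀ (k : ℕ), ∀ x ∈ X.Jext J m,
          (γ' n).dpow k (X.act f x) = X.act f ((γ' m).dpow k x))) ∧
      (∀ (k : ℕ), ∀ x ∈ J, (γ' 0).dpow k x = γJ.dpow k x) ∧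
      (∀ (n k : ℕ), ∀ v ∈ X.V n, (γ' n).dpow k v = (γV n).dpow k v))
    ↔
    -- the differential condition `d(f^{[n]}) = f^{[n-1]} d f` for `f ∈ J`, `n > 0`
    (∀ f ∈ J, ∀ n : ℕ,
      X.diff (γJ.dpow (n + 1) f) = X.face0 (γJ.dpow n f) * X.diff f) := by
  open CosimplicialCommRing in
  constructor
  · rintro ⟨γ', hmaps, hJ0, hV⟩ f hf n
    have hfJ0 : f ∈ X.Jext J 0 := X.mem_Jext.mpr (by rw [X.sM_zero]; exact hf)
    have hface0 : X.face0 f ∈ X.Jext J 1 := X.mem_Jext.mpr (by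
      show X.sM 1 (X.δM 1 f) ∈ J
      rw [X.s_δ]
      exact hf)
    have hdV : X.diff f ∈ X.V 1 := X.diff_mem_V f
    have hdJ : X.diff f ∈ X.Jext J 1 := X.mem_Jext.mpr (by
      rw [X.mem_V.mp hdV]
      exact J.zero_mem)
    have h1 : (γ' 1).dpow (n + 1) (X.face1 f) = X.face1 (γJ.dpow (n + 1) f) := by
      have h := (hmaps (OrderHom.const (Fin 1) (1 : Fin 2))).2 (n + 1) f hfJ0
      rw [hJ0 (n + 1) f hf] at h
      exact h
    have h0 : ∀ a, (γ' 1).dpow a (X.face0 f) = X.face0 (γJ.dpow a f) := fun a => by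
      have h := (hmaps (OrderHom.const (Fin 1) (0 : Fin 2))).2 a f hfJ0
      rw [hJ0 a f hf] at h
      exact h
    have hdd : ∀ b, (γ' 1).dpow b (X.diff f) = (γV 1).dpow b (X.diff f) :=
      fun b => hV 1 b _ hdV
    have hx : X.face1 f = X.face0 f + X.diff f := by rw [CosimplicialCommRing.diff]; ring
    have hadd := (γ' 1).dpow_add (n := n + 1) hface0 hdJ
    have key : X.face1 (γJ.dpow (n + 1) f)
        = X.face0 (γJ.dpow (n + 1) f) + X.face0 (γJ.dpow n f) * X.diff f := by
      rw [← h1, hx, hadd]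
      have hcong : ∀ pq ∈ Finset.HasAntidiagonal.antidiagonal (n + 1),
          (γ' 1).dpow pq.1 (X.face0 f) * (γ' 1).dpow pq.2 (X.diff f)
            = X.face0 (γJ.dpow pq.1 f) * (γV 1).dpow pq.2 (X.diff f) :=
        fun pq _ => by rw [h0, hdd]
      rw [Finset.sum_congr rfl hcong, twoterm J γJ γV hγV_norm hf n]
    have hde : X.diff (γJ.dpow (n + 1) f)
        = X.face1 (γJ.dpow (n + 1) f) - X.face0 (γJ.dpow (n + 1) f) := rfl
    rw [hde, key]
    ring
  · intro hd
    refine ⟨fun n => X.gammaExt J γJ γV n, ?_, ?_, ?_⟩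
    · intro m n g
      constructor
      · intro x hx
        rw [X.mem_Jext] at hx ⊢
        rw [X.s_act]
        exact hx
      · intro k x hx
        exact compat J γJ γV hγV_maps hd hγV_norm g k hx
    · intro k x hx
      exact dval_level0 J γJ γV k hx
    · intro n k v hv
      exact dval_V J γJ γV n k hv
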